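/- Work in the real Hilbert space ℓ² = ℓ²(ℕ; ℝ) with its norm topology and coordinatewise order, and let I_d be the ideal of subsets of ℕ of natural density zero. Define t_n = 2 for all n and x_n = e_n, the n-th standard unit vector of ℓ². Then: (i) the sequence x = (x_n) is weighted I_τ-bounded, i.e., for every neighborhood U of zero there exists λ > 0 with {n ∈ ℕ : λ t_n x_n ∉ U} ∈ I_d; but (ii) the weighted I_τ-cluster point set of x is empty, i.e., for every c ∈ ℓ² there exists a neighborhood U of zero such that {n ∈ ℕ : t_n(x_n − c) ∈ U} ∈ I_d. -/

import Mathlib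

open Topology Filter Set

/-- The ideal of subsets of ℕ of natural density zero. -/
def densityZeroIdeal : Set (Set ℕ) :=
  {A | Tendsto (fun n : ℕ => ((A ∩ Set.Icc 1 n).ncard : ℝ) / n) atTop (𝓝 0)}

/-- The real Hilbert space ℓ² of square-summable real sequences. -/
noncomputable abbrev ellTwo : Type := lp (fun _ : ℕ => ℝ) 2

/-- The `n`-th standard unit vector of ℓ². -/
noncomputable def stdUnitVec (n : ℕ) : ellTwo := lp.single 2 n (1 : ℝ)

lemma finite_mem_densityZeroIdeal {A : Set ℕ} (hA : A.Finite) : A ∈ densityZeroIdeal := by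
  have h1 : Tendsto (fun n : ℕ => (A.ncard : ℝ) / n) atTop (𝓝 0) :=
    tendsto_const_div_atTop_nhds_zero_nat _
  refine squeeze_zero (fun n => by positivity) (fun n => ?_) h1
  have hle : ((A ∩ Set.Icc 1 n).ncard : ℝ) ≤ A.ncard := by
    exact_mod_cast Set.ncard_le_ncard Set.inter_subset_left hA
  exact div_le_div_of_nonneg_right hle (Nat.cast_nonneg n)

lemma norm_stdUnitVec (n : ℕ) : ‖stdUnitVec n‖ = 1 := by
  have := lp.norm_single (p := 2) (E := fun _ : ℕ => ℝ)
    (by norm_num) n (1 : ℝ)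
  simpa [stdUnitVec] using this

/-- In ℓ² with weights `t n = 2` and `x n = e n` the standard unit vectors:
(i) the sequence is weighted `I`-τ-bounded for the density-zero ideal; but (ii) its weighted
`I`-τ-cluster point set is empty. -/
theorem ellTwo_weighted_bounded_but_no_cluster_points :
    (∀ U ∈ 𝓝 (0 : ellTwo), ∃ lam : ℝ, 0 < lam ∧
        {n : ℕ | (lam * 2) • stdUnitVec n ∉ U} ∈ densityZeroIdeal) ∧
    (∀ c : ellTwo, ∃ U ∈ 𝓝 (0 : ellTwo),
        {n : ℕ | (2 : ℝ) • (stdUnitVec n - c) ∈ U} ∈ densityZeroIdeal) := by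
  constructor
  · intro U hU
    obtain ⟨ε, hε, hball⟩ := Metric.mem_nhds_iff.mp hU
    refine ⟨ε / 4, by linarith, ?_⟩
    have : {n : ℕ | (ε / 4 * 2) • stdUnitVec n ∉ U} = ∅ := by
      ext n
      simp only [Set.mem_setOf_eq, Set.mem_empty_iff_false, iff_false, not_not]
      apply hball
      simp only [Metric.mem_ball, dist_zero_right, norm_smul, norm_stdUnitVec,
        mul_one, Real.norm_eq_abs]
      rw [abs_of_pos (by linarith)]
      linarith
    rw [this]
    exact finite_mem_densityZeroIdeal Set.finite_empty
  · intro c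
    refine ⟨Metric.ball 0 1, Metric.ball_mem_nhds 0 one_pos, ?_⟩
    apply finite_mem_densityZeroIdeal
    apply Set.Subsingleton.finite
    intro n hn m hm
    by_contra hnm
    simp only [Set.mem_setOf_eq, Metric.mem_ball, dist_zero_right] at hn hm
    have hn' : ‖stdUnitVec n - c‖ < 1 / 2 := by
      have := hn
      rw [norm_smul, Real.norm_eq_abs, abs_of_pos (by norm_num : (0:ℝ) < 2)] at this
      linarith
    have hm' : ‖stdUnitVec m - c‖ < 1 / 2 := by
      have := hm
      rw [norm_smul, Real.norm_eq_abs, abs_of_pos (by norm_num : (0:ℝ) < 2)] at this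
      linarith
    have hlt : ‖stdUnitVec n - stdUnitVec m‖ < 1 := by
      calc ‖stdUnitVec n - stdUnitVec m‖
          = ‖(stdUnitVec n - c) - (stdUnitVec m - c)‖ := by abel_nf
        _ ≤ ‖stdUnitVec n - c‖ + ‖stdUnitVec m - c‖ := norm_sub_le _ _
        _ < 1 := by linarith
    have hge : (1 : ℝ) ≤ ‖stdUnitVec n - stdUnitVec m‖ := by
      have hcoord := lp.norm_apply_le_norm (p := 2) (E := fun _ : ℕ => ℝ)
        (by norm_num) (stdUnitVec n - stdUnitVec m) n
      have : (stdUnitVec n - stdUnitVec m) n = 1 := by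
        simp [stdUnitVec, lp.single_apply, hnm, Ne.symm hnm]
      rw [this] at hcoord
      simpa using hcoord
    linarith
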